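/- Consider t₁(s) = 7 + 3^{3−2s} − 2^{5−2s} as a function of s ∈ (0, 3/2). There exists a unique s₀ ∈ (0, 1/2) with t₁(s₀) = 0; moreover t₁(1/2) = 0, t₁(s) > 0 for all s ∈ (0, s₀) ∪ (1/2, 3/2), and t₁(s) < 0 for all s ∈ (s₀, 1/2). -/

import Mathlib

/-- `t₁(s) = 7 + 3^(3-2s) - 2^(5-2s)`. -/
noncomputable def t1 (s : ℝ) : ℝ := 7 + (3 : ℝ) ^ (3 - 2 * s) - (2 : ℝ) ^ (5 - 2 * s)

open Real Set

/-- First derivative of `t1`. -/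
noncomputable def d1 (s : ℝ) : ℝ :=
  2 * Real.log 2 * (2 : ℝ) ^ (5 - 2 * s) - 2 * Real.log 3 * (3 : ℝ) ^ (3 - 2 * s)

/-- Second derivative of `t1`. -/
noncomputable def d2 (s : ℝ) : ℝ :=
  4 * (Real.log 3) ^ 2 * (3 : ℝ) ^ (3 - 2 * s) - 4 * (Real.log 2) ^ 2 * (2 : ℝ) ^ (5 - 2 * s)

private lemma hd_pow (a : ℝ) (ha : 0 < a) (b : ℝ) (s : ℝ) :
    HasDerivAt (fun s : ℝ => a ^ (b - 2 * s)) (-2 * Real.log a * a ^ (b - 2 * s)) s := by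
  have h1 : HasDerivAt (fun s : ℝ => b - 2 * s) (-2) s := by
    simpa using ((hasDerivAt_id s).const_mul 2).const_sub b
  have h2 := (Real.hasStrictDerivAt_const_rpow ha (b - 2 * s)).hasDerivAt.comp s h1
  exact h2.congr_deriv (by ring)

private lemma hasDerivAt_t1 (s : ℝ) : HasDerivAt t1 (d1 s) s := by
  have h3 := hd_pow 3 (by norm_num) 3 s
  have h2 := hd_pow 2 (by norm_num) 5 s
  have h := (h3.const_add 7).sub h2
  exact h.congr_deriv (by unfold d1; ring)

private lemma hasDerivAt_d1 (s : ℝ) : HasDerivAt d1 (d2 s) s := by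
  have h3 := (hd_pow 3 (by norm_num) 3 s).const_mul (2 * Real.log 3)
  have h2 := (hd_pow 2 (by norm_num) 5 s).const_mul (2 * Real.log 2)
  have h := h2.sub h3
  exact h.congr_deriv (by unfold d2; ring)

private lemma cont_t1 : Continuous t1 :=
  continuous_iff_continuousAt.2 fun s => (hasDerivAt_t1 s).continuousAt

private lemma deriv_t1 : deriv t1 = d1 :=
  funext fun s => (hasDerivAt_t1 s).deriv

private lemma deriv2_t1 : deriv^[2] t1 = d2 := by
  rw [Function.iterate_succ_apply', Function.iterate_one, deriv_t1]
  exact funext fun s => (hasDerivAt_d1 s).deriv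

private lemma log_facts :
    0 < Real.log 2 ∧ 0 < Real.log 3 ∧ 4 * Real.log 2 < 3 * Real.log 3 ∧
      9 * Real.log 3 < 16 * Real.log 2 := by
  have l2 : 0 < Real.log 2 := Real.log_pos (by norm_num)
  have l3 : 0 < Real.log 3 := Real.log_pos (by norm_num)
  have h1 : Real.log ((2 : ℝ) ^ (4 : ℕ)) < Real.log ((3 : ℝ) ^ (3 : ℕ)) :=
    Real.log_lt_log (by norm_num) (by norm_num)
  have h2 : Real.log ((3 : ℝ) ^ (9 : ℕ)) < Real.log ((2 : ℝ) ^ (16 : ℕ)) :=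
    Real.log_lt_log (by norm_num) (by norm_num)
  rw [Real.log_pow, Real.log_pow] at h1 h2
  push_cast at h1 h2
  exact ⟨l2, l3, by linarith, by linarith⟩

private lemma ratio_rpow (y : ℝ) : ((3 : ℝ) / 2) ^ y * (2 : ℝ) ^ y = (3 : ℝ) ^ y := by
  rw [← Real.mul_rpow (by norm_num) (by norm_num)]
  norm_num

private lemma d2_pos {s : ℝ} (hs : s < 1 / 2) : 0 < d2 s := by
  obtain ⟨l2, l3, h34, _⟩ := log_facts
  set y := 3 - 2 * s with hy
  have hy2 : (2 : ℝ) < y := by simp only [hy]; linarith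
  have e5 : (5 : ℝ) - 2 * s = y + 2 := by simp [hy]; ring
  have e2 : (2 : ℝ) ^ (5 - 2 * s) = (2 : ℝ) ^ y * 4 := by
    rw [e5, Real.rpow_add (by norm_num : (0:ℝ) < 2),
      show ((2:ℝ)) ^ (2:ℝ) = ((2:ℝ)) ^ ((2:ℕ):ℝ) by norm_num, Real.rpow_natCast]
    norm_num
  have hr : ((3 : ℝ) / 2) ^ (2 : ℝ) < ((3 : ℝ) / 2) ^ y :=
    Real.rpow_lt_rpow_left_iff (by norm_num : (1:ℝ) < 3/2) |>.mpr hy2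
  have hr2 : ((3 : ℝ) / 2) ^ (2 : ℝ) = 9 / 4 := by
    rw [show (2:ℝ) = ((2:ℕ):ℝ) by norm_num, Real.rpow_natCast]
    norm_num
  have e3 := ratio_rpow y
  have p2y : (0 : ℝ) < (2 : ℝ) ^ y := Real.rpow_pos_of_pos (by norm_num) y
  have key : 16 * (Real.log 2) ^ 2 < 9 * (Real.log 3) ^ 2 := by nlinarith
  rw [hr2] at hr
  unfold d2
  rw [e2, ← e3]
  have inner : (0:ℝ) < 4 * (Real.log 3) ^ 2 * ((3:ℝ)/2) ^ y - 16 * (Real.log 2) ^ 2 := by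
    nlinarith [mul_pos (pow_pos l3 2) (sub_pos.2 hr)]
  nlinarith [mul_pos p2y inner]

private lemma d1_pos {s : ℝ} (hs : 1 / 2 < s) : 0 < d1 s := by
  obtain ⟨l2, l3, _, h916⟩ := log_facts
  set y := 3 - 2 * s with hy
  have hy2 : y < 2 := by simp only [hy]; linarith
  have e5 : (5 : ℝ) - 2 * s = y + 2 := by simp [hy]; ring
  have e2 : (2 : ℝ) ^ (5 - 2 * s) = (2 : ℝ) ^ y * 4 := by
    rw [e5, Real.rpow_add (by norm_num : (0:ℝ) < 2),
      show ((2:ℝ)) ^ (2:ℝ) = ((2:ℝ)) ^ ((2:ℕ):ℝ) by norm_num, Real.rpow_natCast]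
    norm_num
  have hr : ((3 : ℝ) / 2) ^ y < ((3 : ℝ) / 2) ^ (2 : ℝ) :=
    Real.rpow_lt_rpow_left_iff (by norm_num : (1:ℝ) < 3/2) |>.mpr hy2
  have hr2 : ((3 : ℝ) / 2) ^ (2 : ℝ) = 9 / 4 := by
    rw [show (2:ℝ) = ((2:ℕ):ℝ) by norm_num, Real.rpow_natCast]
    norm_num
  rw [hr2] at hr
  have e3 := ratio_rpow y
  have p2y : (0 : ℝ) < (2 : ℝ) ^ y := Real.rpow_pos_of_pos (by norm_num) y
  have pry : (0 : ℝ) < ((3 : ℝ)/2) ^ y := Real.rpow_pos_of_pos (by norm_num) y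
  unfold d1
  rw [e2, ← e3]
  nlinarith [mul_pos p2y l3, mul_pos (mul_pos p2y l3) (sub_pos.2 hr)]

private lemma t1_zero : t1 0 = 2 := by
  unfold t1
  norm_num

private lemma t1_half : t1 (1 / 2) = 0 := by
  unfold t1
  norm_num

private lemma t1_quarter : t1 (1 / 4) < 0 := by
  have e1 : (3 : ℝ) ^ (3 - 2 * (1/4 : ℝ)) = 9 * Real.sqrt 3 := by
    rw [show (3 : ℝ) - 2 * (1/4 : ℝ) = 2 + 1/2 by norm_num,
      Real.rpow_add (by norm_num : (0:ℝ) < 3), ← Real.sqrt_eq_rpow,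
      show (2:ℝ) = ((2:ℕ):ℝ) by norm_num, Real.rpow_natCast]
    norm_num
  have e2 : (2 : ℝ) ^ (5 - 2 * (1/4 : ℝ)) = 16 * Real.sqrt 2 := by
    rw [show (5 : ℝ) - 2 * (1/4 : ℝ) = 4 + 1/2 by norm_num,
      Real.rpow_add (by norm_num : (0:ℝ) < 2), ← Real.sqrt_eq_rpow,
      show (4:ℝ) = ((4:ℕ):ℝ) by norm_num, Real.rpow_natCast]
    norm_num
  have h3 : Real.sqrt 3 < 1.7321 := by
    rw [show (1.7321 : ℝ) = Real.sqrt (1.7321 ^ 2) by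
      rw [Real.sqrt_sq (by norm_num)]]
    exact Real.sqrt_lt_sqrt (by norm_num) (by norm_num)
  have h2 : (1.4142 : ℝ) < Real.sqrt 2 := by
    rw [show (1.4142 : ℝ) = Real.sqrt (1.4142 ^ 2) by
      rw [Real.sqrt_sq (by norm_num)]]
    exact Real.sqrt_lt_sqrt (by norm_num) (by norm_num)
  unfold t1
  rw [e1, e2]
  nlinarith

theorem stmt5 :
    ∃ s₀ ∈ Set.Ioo (0 : ℝ) (1 / 2),
      t1 s₀ = 0 ∧ (∀ s ∈ Set.Ioo (0 : ℝ) (1 / 2), t1 s = 0 → s = s₀) ∧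
      t1 (1 / 2) = 0 ∧
      (∀ s ∈ Set.Ioo (0 : ℝ) s₀ ∪ Set.Ioo (1 / 2 : ℝ) (3 / 2), 0 < t1 s) ∧
      (∀ s ∈ Set.Ioo s₀ (1 / 2 : ℝ), t1 s < 0) := by
  -- strict convexity on [0, 1/2]
  have hconv : StrictConvexOn ℝ (Set.Icc (0 : ℝ) (1/2)) t1 := by
    apply strictConvexOn_of_deriv2_pos (convex_Icc _ _) cont_t1.continuousOn
    intro x hx
    rw [interior_Icc] at hx
    rw [deriv2_t1]
    exact d2_pos hx.2
  -- strict monotonicity on [1/2, 3/2)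
  have hmono : StrictMonoOn t1 (Set.Ico (1/2 : ℝ) (3/2)) := by
    apply strictMonoOn_of_deriv_pos (convex_Ico _ _) cont_t1.continuousOn
    intro x hx
    rw [interior_Ico] at hx
    rw [deriv_t1]
    exact d1_pos hx.1
  -- existence of the root s₀ ∈ (0, 1/4)
  have hIVT : (0 : ℝ) ∈ Set.Ioo (t1 (1/4)) (t1 0) := by
    rw [t1_zero]
    exact ⟨t1_quarter, by norm_num⟩
  obtain ⟨s₀, hs₀mem, hs₀⟩ :=
    intermediate_value_Ioo' (by norm_num : (0:ℝ) ≤ 1/4) cont_t1.continuousOn hIVT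
  have hs₀0 : 0 < s₀ := hs₀mem.1
  have hs₀q : s₀ < 1/4 := hs₀mem.2
  have hs₀half : s₀ < 1/2 := by linarith
  have mem0 : (0 : ℝ) ∈ Set.Icc (0:ℝ) (1/2) := by constructor <;> norm_num
  have memhalf : (1/2 : ℝ) ∈ Set.Icc (0:ℝ) (1/2) := by constructor <;> norm_num
  have mems₀ : s₀ ∈ Set.Icc (0:ℝ) (1/2) := ⟨hs₀0.le, hs₀half.le⟩
  -- positivity on (0, s₀)
  have hpos1 : ∀ s ∈ Set.Ioo (0:ℝ) s₀, 0 < t1 s := by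
    intro s hs
    have hmem : s ∈ Set.Icc (0:ℝ) (1/2) := ⟨hs.1.le, by linarith [hs.2]⟩
    have hsl := hconv.slope_strict_mono_adjacent hmem memhalf hs.2 hs₀half
    rw [hs₀, t1_half] at hsl
    have hd : 0 < s₀ - s := by linarith [hs.2]
    rw [div_lt_iff₀ hd] at hsl
    norm_num at hsl
    nlinarith
  -- negativity on (s₀, 1/2)
  have hneg : ∀ s ∈ Set.Ioo s₀ (1/2 : ℝ), t1 s < 0 := by
    intro s hs
    have hmem : s ∈ Set.Icc (0:ℝ) (1/2) := ⟨by linarith [hs.1], hs.2.le⟩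
    have hsl := hconv.slope_strict_mono_adjacent mems₀ memhalf hs.1 hs.2
    rw [hs₀, t1_half] at hsl
    have hd1 : 0 < s - s₀ := by linarith [hs.1]
    have hd2 : 0 < 1/2 - s := by linarith [hs.2]
    by_contra h
    push_neg at h
    have l1 : 0 ≤ (t1 s - 0) / (s - s₀) := div_nonneg (by linarith) hd1.le
    have l2 : (0 - t1 s) / (1/2 - s) ≤ 0 := div_nonpos_of_nonpos_of_nonneg (by linarith) hd2.le
    linarith
  -- positivity on (1/2, 3/2)
  have hpos2 : ∀ s ∈ Set.Ioo (1/2 : ℝ) (3/2), 0 < t1 s := by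
    intro s hs
    have := hmono ⟨le_refl _, by norm_num⟩ ⟨hs.1.le, hs.2⟩ hs.1
    rwa [t1_half] at this
  refine ⟨s₀, ⟨hs₀0, hs₀half⟩, hs₀, ?_, t1_half, ?_, hneg⟩
  · intro s hsmem hzero
    rcases lt_trichotomy s s₀ with h | h | h
    · exact absurd hzero (by have := hpos1 s ⟨hsmem.1, h⟩; linarith)
    · exact h
    · exact absurd hzero (by have := hneg s ⟨h, hsmem.2⟩; linarith)
  · intro s hs
    rcases hs with h | h
    · exact hpos1 s h
    · exact hpos2 s h
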